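/- For every real t, each of the three lines ℓ₁'(t), ℓ₂'(t), ℓ₃'(t) meets the zero set {(x, y) : I₃'(x, y, t) = 0} in exactly one point; that is, the conic I₃'(·, ·, t) = 0 is the inconic of the excentral triangle centered at X₄₀ = (0, 0). -/

import Mathlib

noncomputable section

/-- Inradius determined by Euler's relation: `r = (R² − d²)/(2R)`. -/
def rIn (R d : ℝ) : ℝ := (R ^ 2 - d ^ 2) / (2 * R)

/-- `ω = √(R² − (d cos t + r)²)`. -/
def om (R d t : ℝ) : ℝ := Real.sqrt (R ^ 2 - (d * Real.cos t + rIn R d) ^ 2)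

/-- Vertices `P₁(t), P₂(t), P₃(t)` of the poristic triangle
(circumcircle centered at `X₃ = (d,0)` with radius `R`,
incircle centered at `X₁ = (2d,0)` with radius `r`). -/
def Pv (R d t : ℝ) : Fin 3 → ℝ × ℝ :=
  ![(Real.cos t * (d * Real.cos t + rIn R d) - om R d t * Real.sin t + d,
     (d * Real.cos t + rIn R d) * Real.sin t + om R d t * Real.cos t),
    (Real.cos t * (d * Real.cos t + rIn R d) + om R d t * Real.sin t + d,
     (d * Real.cos t + rIn R d) * Real.sin t - om R d t * Real.cos t),
    (R * (2 * d * R - (R ^ 2 + d ^ 2) * Real.cos t) /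
       (R ^ 2 - 2 * d * R * Real.cos t + d ^ 2) + d,
     R * (d ^ 2 - R ^ 2) * Real.sin t /
       (R ^ 2 - 2 * d * R * Real.cos t + d ^ 2))]

/-- Coefficient of `x` in the excentral sideline `ℓᵢ'(t)`. -/
def lineA (R d t : ℝ) : Fin 3 → ℝ :=
  ![(d * Real.sin t - om R d t) * Real.sin t - rIn R d * Real.cos t,
    (d * Real.sin t + om R d t) * Real.sin t - rIn R d * Real.cos t,
    R * Real.cos t - d]

/-- Coefficient of `y` in the excentral sideline `ℓᵢ'(t)`. -/
def lineB (R d t : ℝ) : Fin 3 → ℝ :=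
  ![-((d * Real.cos t + rIn R d) * Real.sin t - om R d t * Real.cos t),
    -((d * Real.cos t + rIn R d) * Real.sin t + om R d t * Real.cos t),
    R * Real.sin t]

/-- Constant coefficient in the excentral sideline `ℓᵢ'(t)`. -/
def lineC (R d t : ℝ) : Fin 3 → ℝ :=
  ![R ^ 2 - d ^ 2, R ^ 2 - d ^ 2, -(2 * d * R * Real.cos t) + R ^ 2 + d ^ 2]

/-- The polynomial `I₃'(x, y, t)` defining the excentral `X₃`-centered inconic. -/
def I3 (R d t x y : ℝ) : ℝ :=
  ((R ^ 2 - d ^ 2) ^ 2 - 8 * d * R ^ 2 * (R * Real.cos t - d) * Real.sin t ^ 2) * x ^ 2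
  + ((R ^ 2 - d ^ 2) ^ 2
      - 4 * d * R * Real.cos t * ((R * Real.cos t - d) ^ 2 - R ^ 2 * Real.sin t ^ 2)) * y ^ 2
  + 4 * d * R * Real.sin t * (2 * R * Real.cos t - R - d) * (2 * R * Real.cos t + R - d)
      * (x * y)
  - (R ^ 2 - d ^ 2) ^ 2 * (R ^ 2 + d ^ 2 - 2 * d * R * Real.cos t)


/-- A line `A x + B y + C = 0` satisfying the tangency condition meets the conic
`a x² + b y² + g x y − K = 0` in exactly one point. -/
theorem conic_line_tangent (a b g K A B C : ℝ)
    (hN : 0 < b * A ^ 2 - g * A * B + a * B ^ 2)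
    (hT : C ^ 2 * (4 * a * b - g ^ 2)
        = 4 * K * (b * A ^ 2 - g * A * B + a * B ^ 2)) :
    ∃! p : ℝ × ℝ, A * p.1 + B * p.2 + C = 0 ∧
      a * p.1 ^ 2 + b * p.2 ^ 2 + g * (p.1 * p.2) - K = 0 := by
  set N : ℝ := b * A ^ 2 - g * A * B + a * B ^ 2 with hNdef
  set G2 : ℝ := 2 * A * B * (a - b) + (B ^ 2 - A ^ 2) * g with hGdef
  set S : ℝ := a * A ^ 2 + g * A * B + b * B ^ 2 with hSdef
  have hN' : N ≠ 0 := ne_of_gt hN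
  have hab : A ^ 2 + B ^ 2 ≠ 0 := by
    intro h
    have hA : A = 0 := by nlinarith [sq_nonneg A, sq_nonneg B]
    have hB : B = 0 := by nlinarith [sq_nonneg A, sq_nonneg B]
    rw [hNdef, hA, hB] at hN; nlinarith
  have hkey : ∀ x y : ℝ,
      4 * N * (A ^ 2 + B ^ 2) ^ 2 * (a * x ^ 2 + b * y ^ 2 + g * (x * y) - K)
      = (2 * N * (B * x - A * y) - C * G2) ^ 2
        + 4 * N * (A * x + B * y + C)
            * (S * ((A * x + B * y + C) - 2 * C) + G2 * (B * x - A * y))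
        + (A ^ 2 + B ^ 2) ^ 2 * (C ^ 2 * (4 * a * b - g ^ 2) - 4 * K * N) := by
    intro x y; rw [hNdef, hGdef, hSdef]; ring
  have hden : 2 * N * (A ^ 2 + B ^ 2) ≠ 0 :=
    mul_ne_zero (mul_ne_zero two_ne_zero hN') hab
  set px : ℝ := C * (B * G2 - 2 * A * N) / (2 * N * (A ^ 2 + B ^ 2)) with hpx
  set py : ℝ := -(C * (A * G2 + 2 * B * N)) / (2 * N * (A ^ 2 + B ^ 2)) with hpy
  have hl0 : A * px + B * py + C = 0 := by
    rw [hpx, hpy]; field_simp; ring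
  have hq0 : a * px ^ 2 + b * py ^ 2 + g * (px * py) - K = 0 := by
    have h1 : 2 * N * (B * px - A * py) - C * G2 = 0 := by
      rw [hpx, hpy]; field_simp; ring
    have h2 := hkey px py
    rw [h1, hl0] at h2
    have h3 : 4 * N * (A ^ 2 + B ^ 2) ^ 2
        * (a * px ^ 2 + b * py ^ 2 + g * (px * py) - K) = 0 := by
      linear_combination h2 + (A ^ 2 + B ^ 2) ^ 2 * hT
    have h4 : (4 * N * (A ^ 2 + B ^ 2) ^ 2) ≠ 0 := by
      exact mul_ne_zero (mul_ne_zero (by norm_num) hN') (pow_ne_zero 2 hab)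
    have := mul_eq_zero.mp h3
    rcases this with h | h
    · exact absurd h (by
        intro hcontra
        exact h4 (by linarith [hcontra] ))
    · exact h
  refine ⟨(px, py), ⟨hl0, hq0⟩, ?_⟩
  rintro ⟨x, y⟩ ⟨hl, hq⟩
  have hid := hkey x y
  rw [hl, hq] at hid
  have hsq : (2 * N * (B * x - A * y) - C * G2) ^ 2 = 0 := by
    linear_combination -hid - (A ^ 2 + B ^ 2) ^ 2 * hT
  have hz : 2 * N * (B * x - A * y) - C * G2 = 0 := by
    exact pow_eq_zero_iff (two_ne_zero).elim |>.mp hsq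
  have hx : 2 * N * (A ^ 2 + B ^ 2) * x = C * (B * G2 - 2 * A * N) := by
    linear_combination B * hz + 2 * N * A * hl
  have hy : 2 * N * (A ^ 2 + B ^ 2) * y = -(C * (A * G2 + 2 * B * N)) := by
    linear_combination -(A * hz) + 2 * N * B * hl
  have : x = px := by
    rw [hpx, eq_div_iff hden]; linear_combination hx
  have hy' : y = py := by
    rw [hpy, eq_div_iff hden]; linear_combination hy
  exact Prod.ext this hy'


set_option maxHeartbeats 4000000 in

theorem excentral_sidelines_tangent_to_I3
    (R d : ℝ) (hd : 0 < d) (hdR : d < R) (t : ℝ) (i : Fin 3) :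
    ∃! p : ℝ × ℝ,
      lineA R d t i * p.1 + lineB R d t i * p.2 + lineC R d t i = 0 ∧
      I3 R d t p.1 p.2 = 0 := by
  have hR : (0:ℝ) < R := lt_trans hd hdR
  set c := Real.cos t with hcdef
  set s := Real.sin t with hsdef
  set r := rIn R d with hrdef
  set w := om R d t with hwdef
  have hc : -1 ≤ c ∧ c ≤ 1 := ⟨Real.neg_one_le_cos t, Real.cos_le_one t⟩
  have hgR : R ^ 2 - 2 * R * r - d ^ 2 = 0 := by
    rw [hrdef]; unfold rIn; field_simp; ring
  have hgs : s ^ 2 + c ^ 2 - 1 = 0 := by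
    rw [hsdef, hcdef]; linear_combination Real.sin_sq_add_cos_sq t
  have hrpos : 0 < r := by
    rw [hrdef]; unfold rIn
    apply div_pos (by nlinarith) (by linarith)
  have hdr : d + r < R := by nlinarith [hgR]
  have hgw : w ^ 2 - R ^ 2 + (d * c + r) ^ 2 = 0 := by
    have h1 : (0:ℝ) < R - (d * c + r) := by nlinarith [hc.2]
    have h2 : (0:ℝ) < R + (d * c + r) := by nlinarith [hc.1]
    have hrad : (0:ℝ) ≤ R ^ 2 - (d * c + r) ^ 2 := by nlinarith [mul_pos h1 h2]
    have : w ^ 2 = R ^ 2 - (d * c + r) ^ 2 := by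
      rw [hwdef]; unfold om; rw [← hcdef, ← hrdef]; exact Real.sq_sqrt hrad
    linarith
  have hE : (0:ℝ) < R ^ 2 + d ^ 2 - 2 * d * R * c := by
    nlinarith [hc.2, sq_nonneg (R - d), mul_nonneg (mul_nonneg hd.le hR.le) (by linarith [hc.2] : (0:ℝ) ≤ 1 - c)]
  have hdet : 4 * ((R ^ 2 - d ^ 2) ^ 2 - 8 * d * R ^ 2 * (R * c - d) * s ^ 2) * ((R ^ 2 - d ^ 2) ^ 2 - 4 * d * R * c * ((R * c - d) ^ 2 - R ^ 2 * s ^ 2)) - (4 * d * R * s * (2 * R * c - R - d) * (2 * R * c + R - d)) ^ 2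
      = (2 * (R ^ 2 - d ^ 2) * (R ^ 2 + d ^ 2 - 2 * d * R * c)) ^ 2 := by
    linear_combination ((512 : ℝ)*d*r^5*c + (-512 : ℝ)*d*r^5*c*s^2 + (-512 : ℝ)*d*r^5*c^3 + (-256 : ℝ)*d^2*r^4 + (256 : ℝ)*d^2*r^4*s^2 + (256 : ℝ)*d^2*r^4*c^2 + (2048 : ℝ)*d^2*r^4*c^2*s^2 + (-2048 : ℝ)*d^2*r^4*c^2*s^4 + (-2048 : ℝ)*d^2*r^4*c^4*s^2 + (256 : ℝ)*d^3*r^3*c + (-1280 : ℝ)*d^3*r^3*c*s^2 + (1024 : ℝ)*d^3*r^3*c*s^4 + (-256 : ℝ)*d^3*r^3*c^3 + (1024 : ℝ)*d^3*r^3*c^3*s^2 + (-64 : ℝ)*d^4*r^2 + (64 : ℝ)*d^4*r^2*s^2 + (64 : ℝ)*d^4*r^2*c^2 + (1536 : ℝ)*d^4*r^2*c^2*s^2 + (-1536 : ℝ)*d^4*r^2*c^2*s^4 + (-1536 : ℝ)*d^4*r^2*c^4*s^2 + (-512 : ℝ)*d^5*r*c*s^2 + (512 : ℝ)*d^5*r*c*s^4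 + (512 : ℝ)*d^5*r*c^3*s^2 + (128 : ℝ)*d^6*c^2*s^2 + (-128 : ℝ)*d^6*c^2*s^4 + (-128 : ℝ)*d^6*c^4*s^2 + (256 : ℝ)*R*d*r^4*c + (-256 : ℝ)*R*d*r^4*c*s^2 + (-256 : ℝ)*R*d*r^4*c^3 + (-128 : ℝ)*R*d^2*r^3 + (128 : ℝ)*R*d^2*r^3*s^2 + (128 : ℝ)*R*d^2*r^3*c^2 + (1024 : ℝ)*R*d^2*r^3*c^2*s^2 + (-1024 : ℝ)*R*d^2*r^3*c^2*s^4 + (-1024 : ℝ)*R*d^2*r^3*c^4*s^2 + (64 : ℝ)*R*d^3*r^2*c + (-576 : ℝ)*R*d^3*r^2*c*s^2 + (512 : ℝ)*R*d^3*r^2*c*s^4 + (-64 : ℝ)*R*d^3*r^2*c^3 + (512 : ℝ)*R*d^3*r^2*c^3*s^2 + (512 : ℝ)*R*d^4*r*c^2*s^2 + (-512 : ℝ)*R*d^4*r*c^2*s^4 + (-512 : ℝ)*R*d^4*r*c^4*s^2 + (-128 : ℝ)*R*d^5*c*s^2 + (128 : ℝ)*R*d^5*c*s^4 + (128 : ℝ)*R*d^5*c^3*s^2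 + (128 : ℝ)*R^2*d*r^3*c + (-128 : ℝ)*R^2*d*r^3*c*s^2 + (-128 : ℝ)*R^2*d*r^3*c^3 + (-64 : ℝ)*R^2*d^2*r^2 + (64 : ℝ)*R^2*d^2*r^2*s^2 + (64 : ℝ)*R^2*d^2*r^2*c^2 + (512 : ℝ)*R^2*d^2*r^2*c^2*s^2 + (-512 : ℝ)*R^2*d^2*r^2*c^2*s^4 + (-512 : ℝ)*R^2*d^2*r^2*c^4*s^2 + (-256 : ℝ)*R^2*d^3*r*c*s^2 + (256 : ℝ)*R^2*d^3*r*c*s^4 + (256 : ℝ)*R^2*d^3*r*c^3*s^2 + (16 : ℝ)*R^2*d^4 + (-16 : ℝ)*R^2*d^4*s^2 + (-16 : ℝ)*R^2*d^4*c^2 + (128 : ℝ)*R^2*d^4*c^2*s^2 + (-128 : ℝ)*R^2*d^4*c^2*s^4 + (-128 : ℝ)*R^2*d^4*c^4*s^2 + (64 : ℝ)*R^3*d*r^2*c + (-64 : ℝ)*R^3*d*r^2*c*s^2 + (-64 : ℝ)*R^3*d*r^2*c^3 + (-32 : ℝ)*R^3*d^2*r + (32 : ℝ)*R^3*d^2*r*s^2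 + (32 : ℝ)*R^3*d^2*r*c^2 + (256 : ℝ)*R^3*d^2*r*c^2*s^2 + (-256 : ℝ)*R^3*d^2*r*c^2*s^4 + (-256 : ℝ)*R^3*d^2*r*c^4*s^2 + (-16 : ℝ)*R^3*d^3*c + (-112 : ℝ)*R^3*d^3*c*s^2 + (128 : ℝ)*R^3*d^3*c*s^4 + (16 : ℝ)*R^3*d^3*c^3 + (128 : ℝ)*R^3*d^3*c^3*s^2 + (32 : ℝ)*R^4*d*r*c + (-32 : ℝ)*R^4*d*r*c*s^2 + (-32 : ℝ)*R^4*d*r*c^3 + (-16 : ℝ)*R^4*d^2 + (16 : ℝ)*R^4*d^2*s^2 + (16 : ℝ)*R^4*d^2*c^2 + (128 : ℝ)*R^4*d^2*c^2*s^2 + (-128 : ℝ)*R^4*d^2*c^2*s^4 + (-128 : ℝ)*R^4*d^2*c^4*s^2 + (16 : ℝ)*R^5*d*c + (-16 : ℝ)*R^5*d*c*s^2 + (-16 : ℝ)*R^5*d*c^3)*hgR + ((-512 : ℝ)*d^3*r^5*c + (256 : ℝ)*d^4*r^4 + (-2048 : ℝ)*d^4*r^4*c^2*s^2 + (-256 :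 ℝ)*d^5*r^3*c + (1024 : ℝ)*d^5*r^3*c*s^2 + (64 : ℝ)*d^6*r^2 + (-1536 : ℝ)*d^6*r^2*c^2*s^2 + (512 : ℝ)*d^7*r*c*s^2 + (-128 : ℝ)*d^8*c^2*s^2 + (-1024 : ℝ)*R*d*r^6*c + (512 : ℝ)*R*d^2*r^5 + (-4096 : ℝ)*R*d^2*r^5*c^2*s^2 + (-768 : ℝ)*R*d^3*r^4*c + (2048 : ℝ)*R*d^3*r^4*c*s^2 + (256 : ℝ)*R*d^4*r^3 + (-4096 : ℝ)*R*d^4*r^3*c^2*s^2 + (-64 : ℝ)*R*d^5*r^2*c + (1536 : ℝ)*R*d^5*r^2*c*s^2 + (-768 : ℝ)*R*d^6*r*c^2*s^2 + (128 : ℝ)*R*d^7*c*s^2)*hgs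
  simp only [lineA, lineB, lineC, I3, ← hcdef, ← hsdef, ← hrdef, ← hwdef]
  fin_cases i <;>
    simp only [Matrix.cons_val_zero, Matrix.cons_val_one, Matrix.head_cons,
      Matrix.cons_val_two, Matrix.tail_cons]
  · -- line 0
    have hNeq : ((R ^ 2 - d ^ 2) ^ 2 - 4 * d * R * c * ((R * c - d) ^ 2 - R ^ 2 * s ^ 2)) * ((d * s - w) * s - r * c) ^ 2 - (4 * d * R * s * (2 * R * c - R - d) * (2 * R * c + R - d)) * ((d * s - w) * s - r * c) * (-((d * c + r) * s - w * c)) + ((R ^ 2 - d ^ 2) ^ 2 - 8 * d * R ^ 2 * (R * c - d) * s ^ 2) * (-((d * c + r) * s - w * c)) ^ 2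
        = (R ^ 2 - d ^ 2) ^ 2 * (R ^ 2 + d ^ 2 - 2 * d * R * c) := by
      linear_combination ((4 : ℝ)*r^2*s^2*w^2 + (4 : ℝ)*r^2*c^2*w^2 + (4 : ℝ)*r^4*s^2 + (4 : ℝ)*r^4*c^2 + (-8 : ℝ)*d*r*c*s^2*w^2 + (8 : ℝ)*d*r*c*s^4*w^2 + (8 : ℝ)*d*r*c^3*s^2*w^2 + (-16 : ℝ)*d*r^2*c^2*s*w + (16 : ℝ)*d*r^2*c^2*s^3*w + (16 : ℝ)*d*r^2*c^4*s*w + (16 : ℝ)*d*r^3*c + (8 : ℝ)*d*r^3*c*s^2 + (-16 : ℝ)*d*r^3*c*s^4 + (-24 : ℝ)*d*r^3*c^3*s^2 + (-8 : ℝ)*d*r^3*c^5 + (-1 : ℝ)*d^2*s^2*w^2 + (-1 : ℝ)*d^2*c^2*w^2 + (16 : ℝ)*d^2*r*c*s^3*w + (-16 : ℝ)*d^2*r*c*s^5*w + (-16 : ℝ)*d^2*r*c^3*s^3*w + (-4 : ℝ)*d^2*r^2 + (-1 : ℝ)*d^2*r^2*s^2 + (4 : ℝ)*d^2*r^2*s^4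 + (-1 : ℝ)*d^2*r^2*c^2 + (28 : ℝ)*d^2*r^2*c^2*s^2 + (-16 : ℝ)*d^2*r^2*c^2*s^4 + (8 : ℝ)*d^2*r^2*c^4 + (-16 : ℝ)*d^2*r^2*c^4*s^2 + (2 : ℝ)*d^3*s^3*w + (2 : ℝ)*d^3*c^2*s*w + (-8 : ℝ)*d^3*r*c*s^4 + (8 : ℝ)*d^3*r*c*s^6 + (8 : ℝ)*d^3*r*c^3*s^4 + (1 : ℝ)*d^4 + (-1 : ℝ)*d^4*s^4 + (-1 : ℝ)*d^4*c^2*s^2 + (2 : ℝ)*R*r*s^2*w^2 + (2 : ℝ)*R*r*c^2*w^2 + (2 : ℝ)*R*r^3*s^2 + (2 : ℝ)*R*r^3*c^2 + (-4 : ℝ)*R*d*c*s^2*w^2 + (4 : ℝ)*R*d*c*s^4*w^2 + (4 : ℝ)*R*d*c^3*s^2*w^2 + (-8 : ℝ)*R*d*r*c^2*s*w + (8 : ℝ)*R*d*r*c^2*s^3*w + (8 : ℝ)*R*d*r*c^4*s*w + (8 : ℝ)*R*d*r^2*c + (4 : ℝ)*R*d*r^2*c*s^2 + (-8 : ℝ)*R*d*r^2*c*s^4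 + (-12 : ℝ)*R*d*r^2*c^3*s^2 + (-4 : ℝ)*R*d*r^2*c^5 + (8 : ℝ)*R*d^2*c*s^3*w + (-8 : ℝ)*R*d^2*c*s^5*w + (-8 : ℝ)*R*d^2*c^3*s^3*w + (-2 : ℝ)*R*d^2*r + (-2 : ℝ)*R*d^2*r*s^4 + (6 : ℝ)*R*d^2*r*c^2*s^2 + (-8 : ℝ)*R*d^2*r*c^2*s^4 + (-8 : ℝ)*R*d^2*r*c^4*s^2 + (-2 : ℝ)*R*d^3*c + (-4 : ℝ)*R*d^3*c*s^4 + (4 : ℝ)*R*d^3*c*s^6 + (4 : ℝ)*R*d^3*c^3*s^4 + (1 : ℝ)*R^2*s^2*w^2 + (1 : ℝ)*R^2*c^2*w^2 + (-4 : ℝ)*R^2*r^2 + (1 : ℝ)*R^2*r^2*s^2 + (1 : ℝ)*R^2*r^2*c^2 + (-2 : ℝ)*R^2*d*s^3*w + (-2 : ℝ)*R^2*d*c^2*s*w + (4 : ℝ)*R^2*d*r*c + (1 : ℝ)*R^2*d^2*s^4 + (1 : ℝ)*R^2*d^2*c^2*s^2 + (-2 : ℝ)*R^3*r + (2 : ℝ)*R^3*d*c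 + (-1 : ℝ)*R^4)*hgR + ((4 : ℝ)*d^2*r^2*w^2 + (4 : ℝ)*d^2*r^4 + (8 : ℝ)*d^3*r*c*s^2*w^2 + (16 : ℝ)*d^3*r^2*c^2*s*w + (-8 : ℝ)*d^3*r^3*c + (-16 : ℝ)*d^3*r^3*c*s^2 + (-8 : ℝ)*d^3*r^3*c^3 + (-16 : ℝ)*d^4*r*c*s^3*w + (4 : ℝ)*d^4*r^2 + (4 : ℝ)*d^4*r^2*s^2 + (8 : ℝ)*d^4*r^2*c^2 + (-16 : ℝ)*d^4*r^2*c^2*s^2 + (8 : ℝ)*d^5*r*c*s^4 + (8 : ℝ)*R*r^3*w^2 + (8 : ℝ)*R*r^5 + (16 : ℝ)*R*d*r^2*c*s^2*w^2 + (32 : ℝ)*R*d*r^3*c^2*s*w + (-16 : ℝ)*R*d*r^4*c + (-32 : ℝ)*R*d*r^4*c*s^2 + (-16 : ℝ)*R*d*r^4*c^3 + (-32 : ℝ)*R*d^2*r^2*c*s^3*w + (8 : ℝ)*R*d^2*r^3 + (8 : ℝ)*R*d^2*r^3*s^2 + (16 : ℝ)*R*d^2*r^3*c^2 + (-32 : ℝ)*R*d^2*r^3*c^2*s^2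 + (4 : ℝ)*R*d^3*c*s^2*w^2 + (8 : ℝ)*R*d^3*r*c^2*s*w + (-8 : ℝ)*R*d^3*r^2*c + (-8 : ℝ)*R*d^3*r^2*c*s^2 + (16 : ℝ)*R*d^3*r^2*c*s^4 + (-4 : ℝ)*R*d^3*r^2*c^3 + (-8 : ℝ)*R*d^4*c*s^3*w + (-8 : ℝ)*R*d^4*r*c^2*s^2 + (4 : ℝ)*R*d^5*c*s^4)*hgs + ((4 : ℝ)*d^2*r^2 + (8 : ℝ)*R*r^3)*hgw
    have hCpos : (0:ℝ) < (R ^ 2 - d ^ 2) := by nlinarith [hc.1, hc.2]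
    have hNpos : (0:ℝ) < ((R ^ 2 - d ^ 2) ^ 2 - 4 * d * R * c * ((R * c - d) ^ 2 - R ^ 2 * s ^ 2)) * ((d * s - w) * s - r * c) ^ 2 - (4 * d * R * s * (2 * R * c - R - d) * (2 * R * c + R - d)) * ((d * s - w) * s - r * c) * (-((d * c + r) * s - w * c)) + ((R ^ 2 - d ^ 2) ^ 2 - 8 * d * R ^ 2 * (R * c - d) * s ^ 2) * (-((d * c + r) * s - w * c)) ^ 2 := by
      rw [hNeq]; exact mul_pos (pow_pos hCpos 2) hE
    have hT : (R ^ 2 - d ^ 2) ^ 2 * (4 * ((R ^ 2 - d ^ 2) ^ 2 - 8 * d * R ^ 2 * (R * c - d) * s ^ 2) * ((R ^ 2 - d ^ 2) ^ 2 - 4 * d * R * c * ((R * c - d) ^ 2 - R ^ 2 * s ^ 2)) - (4 * d * R * s * (2 * R * c - R - d) * (2 * R * c + R - d)) ^ 2)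
        = 4 * ((R ^ 2 - d ^ 2) ^ 2 * (R ^ 2 + d ^ 2 - 2 * d * R * c)) * (((R ^ 2 - d ^ 2) ^ 2 - 4 * d * R * c * ((R * c - d) ^ 2 - R ^ 2 * s ^ 2)) * ((d * s - w) * s - r * c) ^ 2 - (4 * d * R * s * (2 * R * c - R - d) * (2 * R * c + R - d)) * ((d * s - w) * s - r * c) * (-((d * c + r) * s - w * c)) + ((R ^ 2 - d ^ 2) ^ 2 - 8 * d * R ^ 2 * (R * c - d) * s ^ 2) * (-((d * c + r) * s - w * c)) ^ 2) := by
      linear_combination (R ^ 2 - d ^ 2) ^ 2 * hdet - 4 * ((R ^ 2 - d ^ 2) ^ 2 * (R ^ 2 + d ^ 2 - 2 * d * R * c)) * hNeq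
    exact conic_line_tangent ((R ^ 2 - d ^ 2) ^ 2 - 8 * d * R ^ 2 * (R * c - d) * s ^ 2) ((R ^ 2 - d ^ 2) ^ 2 - 4 * d * R * c * ((R * c - d) ^ 2 - R ^ 2 * s ^ 2)) (4 * d * R * s * (2 * R * c - R - d) * (2 * R * c + R - d)) ((R ^ 2 - d ^ 2) ^ 2 * (R ^ 2 + d ^ 2 - 2 * d * R * c)) ((d * s - w) * s - r * c) (-((d * c + r) * s - w * c)) (R ^ 2 - d ^ 2) hNpos hT
  · -- line 1
    have hNeq : ((R ^ 2 - d ^ 2) ^ 2 - 4 * d * R * c * ((R * c - d) ^ 2 - R ^ 2 * s ^ 2)) * ((d * s + w) * s - r * c) ^ 2 - (4 * d * R * s * (2 * R * c - R - d) * (2 * R * c + R - d)) * ((d * s + w) * s - r * c) * (-((d * c + r) * s + w * c)) + ((R ^ 2 - d ^ 2) ^ 2 - 8 * d * R ^ 2 * (R * c - d) * s ^ 2) * (-((d * c + r) * s + w * c)) ^ 2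
        = (R ^ 2 - d ^ 2) ^ 2 * (R ^ 2 + d ^ 2 - 2 * d * R * c) := by
      linear_combination ((4 : ℝ)*r^2*s^2*w^2 + (4 : ℝ)*r^2*c^2*w^2 + (4 : ℝ)*r^4*s^2 + (4 : ℝ)*r^4*c^2 + (-8 : ℝ)*d*r*c*s^2*w^2 + (8 : ℝ)*d*r*c*s^4*w^2 + (8 : ℝ)*d*r*c^3*s^2*w^2 + (16 : ℝ)*d*r^2*c^2*s*w + (-16 : ℝ)*d*r^2*c^2*s^3*w + (-16 : ℝ)*d*r^2*c^4*s*w + (16 : ℝ)*d*r^3*c + (8 : ℝ)*d*r^3*c*s^2 + (-16 : ℝ)*d*r^3*c*s^4 + (-24 : ℝ)*d*r^3*c^3*s^2 + (-8 : ℝ)*d*r^3*c^5 + (-1 : ℝ)*d^2*s^2*w^2 + (-1 : ℝ)*d^2*c^2*w^2 + (-16 : ℝ)*d^2*r*c*s^3*w + (16 : ℝ)*d^2*r*c*s^5*w + (16 : ℝ)*d^2*r*c^3*s^3*w + (-4 : ℝ)*d^2*r^2 + (-1 : ℝ)*d^2*r^2*s^2 + (4 : ℝ)*d^2*r^2*s^4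 + (-1 : ℝ)*d^2*r^2*c^2 + (28 : ℝ)*d^2*r^2*c^2*s^2 + (-16 : ℝ)*d^2*r^2*c^2*s^4 + (8 : ℝ)*d^2*r^2*c^4 + (-16 : ℝ)*d^2*r^2*c^4*s^2 + (-2 : ℝ)*d^3*s^3*w + (-2 : ℝ)*d^3*c^2*s*w + (-8 : ℝ)*d^3*r*c*s^4 + (8 : ℝ)*d^3*r*c*s^6 + (8 : ℝ)*d^3*r*c^3*s^4 + (1 : ℝ)*d^4 + (-1 : ℝ)*d^4*s^4 + (-1 : ℝ)*d^4*c^2*s^2 + (2 : ℝ)*R*r*s^2*w^2 + (2 : ℝ)*R*r*c^2*w^2 + (2 : ℝ)*R*r^3*s^2 + (2 : ℝ)*R*r^3*c^2 + (-4 : ℝ)*R*d*c*s^2*w^2 + (4 : ℝ)*R*d*c*s^4*w^2 + (4 : ℝ)*R*d*c^3*s^2*w^2 + (8 : ℝ)*R*d*r*c^2*s*w + (-8 : ℝ)*R*d*r*c^2*s^3*w + (-8 : ℝ)*R*d*r*c^4*s*w + (8 : ℝ)*R*d*r^2*c + (4 : ℝ)*R*d*r^2*c*s^2 + (-8 : ℝ)*R*d*r^2*c*s^4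 + (-12 : ℝ)*R*d*r^2*c^3*s^2 + (-4 : ℝ)*R*d*r^2*c^5 + (-8 : ℝ)*R*d^2*c*s^3*w + (8 : ℝ)*R*d^2*c*s^5*w + (8 : ℝ)*R*d^2*c^3*s^3*w + (-2 : ℝ)*R*d^2*r + (-2 : ℝ)*R*d^2*r*s^4 + (6 : ℝ)*R*d^2*r*c^2*s^2 + (-8 : ℝ)*R*d^2*r*c^2*s^4 + (-8 : ℝ)*R*d^2*r*c^4*s^2 + (-2 : ℝ)*R*d^3*c + (-4 : ℝ)*R*d^3*c*s^4 + (4 : ℝ)*R*d^3*c*s^6 + (4 : ℝ)*R*d^3*c^3*s^4 + (1 : ℝ)*R^2*s^2*w^2 + (1 : ℝ)*R^2*c^2*w^2 + (-4 : ℝ)*R^2*r^2 + (1 : ℝ)*R^2*r^2*s^2 + (1 : ℝ)*R^2*r^2*c^2 + (2 : ℝ)*R^2*d*s^3*w + (2 : ℝ)*R^2*d*c^2*s*w + (4 : ℝ)*R^2*d*r*c + (1 : ℝ)*R^2*d^2*s^4 + (1 : ℝ)*R^2*d^2*c^2*s^2 + (-2 : ℝ)*R^3*r + (2 : ℝ)*R^3*d*c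 + (-1 : ℝ)*R^4)*hgR + ((4 : ℝ)*d^2*r^2*w^2 + (4 : ℝ)*d^2*r^4 + (8 : ℝ)*d^3*r*c*s^2*w^2 + (-16 : ℝ)*d^3*r^2*c^2*s*w + (-8 : ℝ)*d^3*r^3*c + (-16 : ℝ)*d^3*r^3*c*s^2 + (-8 : ℝ)*d^3*r^3*c^3 + (16 : ℝ)*d^4*r*c*s^3*w + (4 : ℝ)*d^4*r^2 + (4 : ℝ)*d^4*r^2*s^2 + (8 : ℝ)*d^4*r^2*c^2 + (-16 : ℝ)*d^4*r^2*c^2*s^2 + (8 : ℝ)*d^5*r*c*s^4 + (8 : ℝ)*R*r^3*w^2 + (8 : ℝ)*R*r^5 + (16 : ℝ)*R*d*r^2*c*s^2*w^2 + (-32 : ℝ)*R*d*r^3*c^2*s*w + (-16 : ℝ)*R*d*r^4*c + (-32 : ℝ)*R*d*r^4*c*s^2 + (-16 : ℝ)*R*d*r^4*c^3 + (32 : ℝ)*R*d^2*r^2*c*s^3*w + (8 : ℝ)*R*d^2*r^3 + (8 : ℝ)*R*d^2*r^3*s^2 + (16 : ℝ)*R*d^2*r^3*c^2 + (-32 : ℝ)*R*d^2*r^3*c^2*s^2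 + (4 : ℝ)*R*d^3*c*s^2*w^2 + (-8 : ℝ)*R*d^3*r*c^2*s*w + (-8 : ℝ)*R*d^3*r^2*c + (-8 : ℝ)*R*d^3*r^2*c*s^2 + (16 : ℝ)*R*d^3*r^2*c*s^4 + (-4 : ℝ)*R*d^3*r^2*c^3 + (8 : ℝ)*R*d^4*c*s^3*w + (-8 : ℝ)*R*d^4*r*c^2*s^2 + (4 : ℝ)*R*d^5*c*s^4)*hgs + ((4 : ℝ)*d^2*r^2 + (8 : ℝ)*R*r^3)*hgw
    have hCpos : (0:ℝ) < (R ^ 2 - d ^ 2) := by nlinarith [hc.1, hc.2]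
    have hNpos : (0:ℝ) < ((R ^ 2 - d ^ 2) ^ 2 - 4 * d * R * c * ((R * c - d) ^ 2 - R ^ 2 * s ^ 2)) * ((d * s + w) * s - r * c) ^ 2 - (4 * d * R * s * (2 * R * c - R - d) * (2 * R * c + R - d)) * ((d * s + w) * s - r * c) * (-((d * c + r) * s + w * c)) + ((R ^ 2 - d ^ 2) ^ 2 - 8 * d * R ^ 2 * (R * c - d) * s ^ 2) * (-((d * c + r) * s + w * c)) ^ 2 := by
      rw [hNeq]; exact mul_pos (pow_pos hCpos 2) hE
    have hT : (R ^ 2 - d ^ 2) ^ 2 * (4 * ((R ^ 2 - d ^ 2) ^ 2 - 8 * d * R ^ 2 * (R * c - d) * s ^ 2) * ((R ^ 2 - d ^ 2) ^ 2 - 4 * d * R * c * ((R * c - d) ^ 2 - R ^ 2 * s ^ 2)) - (4 * d * R * s * (2 * R * c - R - d) * (2 * R * c + R - d)) ^ 2)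
        = 4 * ((R ^ 2 - d ^ 2) ^ 2 * (R ^ 2 + d ^ 2 - 2 * d * R * c)) * (((R ^ 2 - d ^ 2) ^ 2 - 4 * d * R * c * ((R * c - d) ^ 2 - R ^ 2 * s ^ 2)) * ((d * s + w) * s - r * c) ^ 2 - (4 * d * R * s * (2 * R * c - R - d) * (2 * R * c + R - d)) * ((d * s + w) * s - r * c) * (-((d * c + r) * s + w * c)) + ((R ^ 2 - d ^ 2) ^ 2 - 8 * d * R ^ 2 * (R * c - d) * s ^ 2) * (-((d * c + r) * s + w * c)) ^ 2) := by
      linear_combination (R ^ 2 - d ^ 2) ^ 2 * hdet - 4 * ((R ^ 2 - d ^ 2) ^ 2 * (R ^ 2 + d ^ 2 - 2 * d * R * c)) * hNeq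
    exact conic_line_tangent ((R ^ 2 - d ^ 2) ^ 2 - 8 * d * R ^ 2 * (R * c - d) * s ^ 2) ((R ^ 2 - d ^ 2) ^ 2 - 4 * d * R * c * ((R * c - d) ^ 2 - R ^ 2 * s ^ 2)) (4 * d * R * s * (2 * R * c - R - d) * (2 * R * c + R - d)) ((R ^ 2 - d ^ 2) ^ 2 * (R ^ 2 + d ^ 2 - 2 * d * R * c)) ((d * s + w) * s - r * c) (-((d * c + r) * s + w * c)) (R ^ 2 - d ^ 2) hNpos hT
  · -- line 2
    have hNeq : ((R ^ 2 - d ^ 2) ^ 2 - 4 * d * R * c * ((R * c - d) ^ 2 - R ^ 2 * s ^ 2)) * (R * c - d) ^ 2 - (4 * d * R * s * (2 * R * c - R - d) * (2 * R * c + R - d)) * (R * c - d) * (R * s) + ((R ^ 2 - d ^ 2) ^ 2 - 8 * d * R ^ 2 * (R * c - d) * s ^ 2) * (R * s) ^ 2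
        = (-(2 * d * R * c) + R ^ 2 + d ^ 2) ^ 2 * (R ^ 2 + d ^ 2 - 2 * d * R * c) := by
      linear_combination ((-16 : ℝ)*r^4 + (16 : ℝ)*r^4*s^2 + (16 : ℝ)*r^4*c^2 + (32 : ℝ)*d*r^3*c + (32 : ℝ)*d*r^3*c*s^2 + (-64 : ℝ)*d*r^3*c*s^4 + (-96 : ℝ)*d*r^3*c^3*s^2 + (-32 : ℝ)*d*r^3*c^5 + (-20 : ℝ)*d^2*r^2 + (-12 : ℝ)*d^2*r^2*s^2 + (32 : ℝ)*d^2*r^2*s^4 + (-44 : ℝ)*d^2*r^2*c^2 + (96 : ℝ)*d^2*r^2*c^2*s^2 + (64 : ℝ)*d^2*r^2*c^4 + (48 : ℝ)*d^3*r*c + (-16 : ℝ)*d^3*r*c*s^2 + (-32 : ℝ)*d^3*r*c*s^4 + (-32 : ℝ)*d^3*r*c^3 + (-48 : ℝ)*d^3*r*c^3*s^2 + (-16 : ℝ)*d^3*r*c^5 + (-8 : ℝ)*d^4 + (8 : ℝ)*d^4*s^4 + (-8 : ℝ)*d^4*c^2 + (24 : ℝ)*d^4*c^2*s^2 + (16 :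 ℝ)*d^4*c^4 + (-8 : ℝ)*R*r^3 + (8 : ℝ)*R*r^3*s^2 + (8 : ℝ)*R*r^3*c^2 + (16 : ℝ)*R*d*r^2*c + (16 : ℝ)*R*d*r^2*c*s^2 + (-32 : ℝ)*R*d*r^2*c*s^4 + (-48 : ℝ)*R*d*r^2*c^3*s^2 + (-16 : ℝ)*R*d*r^2*c^5 + (-8 : ℝ)*R*d^2*r + (-8 : ℝ)*R*d^2*r*s^2 + (16 : ℝ)*R*d^2*r*s^4 + (-24 : ℝ)*R*d^2*r*c^2 + (48 : ℝ)*R*d^2*r*c^2*s^2 + (32 : ℝ)*R*d^2*r*c^4 + (20 : ℝ)*R*d^3*c + (-12 : ℝ)*R*d^3*c*s^2 + (-8 : ℝ)*R*d^3*c*s^4 + (-16 : ℝ)*R*d^3*c^3 + (-12 : ℝ)*R*d^3*c^3*s^2 + (-4 : ℝ)*R*d^3*c^5 + (-4 : ℝ)*R^2*r^2 + (4 : ℝ)*R^2*r^2*s^2 + (4 : ℝ)*R^2*r^2*c^2 + (8 : ℝ)*R^2*d*r*c + (8 : ℝ)*R^2*d*r*c*s^2 + (-16 : ℝ)*R^2*d*r*c*s^4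 + (-24 : ℝ)*R^2*d*r*c^3*s^2 + (-8 : ℝ)*R^2*d*r*c^5 + (-3 : ℝ)*R^2*d^2 + (-5 : ℝ)*R^2*d^2*s^2 + (8 : ℝ)*R^2*d^2*s^4 + (-13 : ℝ)*R^2*d^2*c^2 + (24 : ℝ)*R^2*d^2*c^2*s^2 + (16 : ℝ)*R^2*d^2*c^4 + (-2 : ℝ)*R^3*r + (2 : ℝ)*R^3*r*s^2 + (2 : ℝ)*R^3*r*c^2 + (4 : ℝ)*R^3*d*c + (4 : ℝ)*R^3*d*c*s^2 + (-8 : ℝ)*R^3*d*c*s^4 + (-12 : ℝ)*R^3*d*c^3*s^2 + (-4 : ℝ)*R^3*d*c^5 + (-1 : ℝ)*R^4 + (1 : ℝ)*R^4*s^2 + (1 : ℝ)*R^4*c^2)*hgR + ((16 : ℝ)*d^2*r^4 + (-32 : ℝ)*d^3*r^3*c + (-64 : ℝ)*d^3*r^3*c*s^2 + (-32 : ℝ)*d^3*r^3*c^3 + (20 : ℝ)*d^4*r^2 + (32 : ℝ)*d^4*r^2*s^2 + (64 : ℝ)*d^4*r^2*c^2 + (-48 : ℝ)*d^5*r*c +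 (-32 : ℝ)*d^5*r*c*s^2 + (-16 : ℝ)*d^5*r*c^3 + (8 : ℝ)*d^6 + (8 : ℝ)*d^6*s^2 + (16 : ℝ)*d^6*c^2 + (32 : ℝ)*R*r^5 + (-64 : ℝ)*R*d*r^4*c + (-128 : ℝ)*R*d*r^4*c*s^2 + (-64 : ℝ)*R*d*r^4*c^3 + (48 : ℝ)*R*d^2*r^3 + (64 : ℝ)*R*d^2*r^3*s^2 + (128 : ℝ)*R*d^2*r^3*c^2 + (-112 : ℝ)*R*d^3*r^2*c + (-96 : ℝ)*R*d^3*r^2*c*s^2 + (-48 : ℝ)*R*d^3*r^2*c^3 + (24 : ℝ)*R*d^4*r + (32 : ℝ)*R*d^4*r*s^2 + (64 : ℝ)*R*d^4*r*c^2 + (-20 : ℝ)*R*d^5*c + (-8 : ℝ)*R*d^5*c*s^2 + (-4 : ℝ)*R*d^5*c^3)*hgs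
    have hCpos : (0:ℝ) < (-(2 * d * R * c) + R ^ 2 + d ^ 2) := by nlinarith [hc.1, hc.2]
    have hNpos : (0:ℝ) < ((R ^ 2 - d ^ 2) ^ 2 - 4 * d * R * c * ((R * c - d) ^ 2 - R ^ 2 * s ^ 2)) * (R * c - d) ^ 2 - (4 * d * R * s * (2 * R * c - R - d) * (2 * R * c + R - d)) * (R * c - d) * (R * s) + ((R ^ 2 - d ^ 2) ^ 2 - 8 * d * R ^ 2 * (R * c - d) * s ^ 2) * (R * s) ^ 2 := by
      rw [hNeq]; exact mul_pos (pow_pos hCpos 2) hE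
    have hT : (-(2 * d * R * c) + R ^ 2 + d ^ 2) ^ 2 * (4 * ((R ^ 2 - d ^ 2) ^ 2 - 8 * d * R ^ 2 * (R * c - d) * s ^ 2) * ((R ^ 2 - d ^ 2) ^ 2 - 4 * d * R * c * ((R * c - d) ^ 2 - R ^ 2 * s ^ 2)) - (4 * d * R * s * (2 * R * c - R - d) * (2 * R * c + R - d)) ^ 2)
        = 4 * ((R ^ 2 - d ^ 2) ^ 2 * (R ^ 2 + d ^ 2 - 2 * d * R * c)) * (((R ^ 2 - d ^ 2) ^ 2 - 4 * d * R * c * ((R * c - d) ^ 2 - R ^ 2 * s ^ 2)) * (R * c - d) ^ 2 - (4 * d * R * s * (2 * R * c - R - d) * (2 * R * c + R - d)) * (R * c - d) * (R * s) + ((R ^ 2 - d ^ 2) ^ 2 - 8 * d * R ^ 2 * (R * c - d) * s ^ 2) * (R * s) ^ 2) := by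
      linear_combination (-(2 * d * R * c) + R ^ 2 + d ^ 2) ^ 2 * hdet - 4 * ((R ^ 2 - d ^ 2) ^ 2 * (R ^ 2 + d ^ 2 - 2 * d * R * c)) * hNeq
    exact conic_line_tangent ((R ^ 2 - d ^ 2) ^ 2 - 8 * d * R ^ 2 * (R * c - d) * s ^ 2) ((R ^ 2 - d ^ 2) ^ 2 - 4 * d * R * c * ((R * c - d) ^ 2 - R ^ 2 * s ^ 2)) (4 * d * R * s * (2 * R * c - R - d) * (2 * R * c + R - d)) ((R ^ 2 - d ^ 2) ^ 2 * (R ^ 2 + d ^ 2 - 2 * d * R * c)) (R * c - d) (R * s) (-(2 * d * R * c) + R ^ 2 + d ^ 2) hNpos hT
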